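/- For integers n ≥ 2 and 0 ≤ m ≤ n-1, define H₁ := -C(n,m)·C(n-2,m) - Σ_{k=1}^{m} (-1)^k (C(n,m+k)·C(n-2,m-k) + C(n,m-k)·C(n-2,m+k)). Then H₁ = C(n-2,m-1) - C(n-2,m). -/

import Mathlib

/-- Binomial coefficient extended to integer arguments: 0 unless 0 ≤ k ≤ n. -/
def ichoose (n k : ℤ) : ℤ :=
  if 0 ≤ k ∧ k ≤ n then (n.toNat).choose k.toNat else 0

open Polynomial

theorem coeff_one_sub_X_pow' (n k : ℕ) : ((1 - X : ℤ[X]) ^ n).coeff k = (-1)^k * n.choose k := by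
  induction n generalizing k with
  | zero => cases k <;> simp [Polynomial.coeff_one]
  | succ n ih =>
    have : ((1 - X : ℤ[X]) ^ (n+1)) = (1 - X)^n - (1 - X)^n * X := by ring
    rw [this]
    cases k with
    | zero => simp [ih]
    | succ k =>
      rw [Polynomial.coeff_sub, Polynomial.coeff_mul_X, ih, ih,
        Nat.choose_succ_succ]
      push_cast
      ring

theorem coeff_one_sub_X_sq_pow' (n k : ℕ) : ((1 - X^2 : ℤ[X]) ^ n).coeff k =
    if 2 ∣ k then ((-1:ℤ))^(k/2) * n.choose (k/2) else 0 := by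
  induction n generalizing k with
  | zero =>
    rcases Nat.even_or_odd k with ⟨j, hj⟩ | ⟨j, hj⟩
    · subst hj
      rcases j with _ | j
      · simp
      · rw [if_pos (show 2 ∣ (j+1+(j+1)) by omega)]
        rw [show (j+1+(j+1))/2 = j+1 by omega]
        simp [Polynomial.coeff_one]
    · subst hj
      rw [if_neg (by omega)]
      simp [Polynomial.coeff_one]
  | succ n ih =>
    have h0 : ((1 - X^2 : ℤ[X]) ^ (n+1)) = (1 - X^2)^n - (1 - X^2)^n * X^2 := by ring
    rw [h0, Polynomial.coeff_sub, Polynomial.coeff_mul_X_pow', ih]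
    by_cases hk : 2 ≤ k
    · rw [if_pos hk, ih]
      by_cases h : 2 ∣ k
      · rw [if_pos h, if_pos (show 2 ∣ (k-2) by omega), if_pos h]
        rw [show (k-2)/2 = k/2 - 1 by omega]
        obtain ⟨j, hj⟩ : ∃ j, k/2 = j+1 := ⟨k/2-1, by omega⟩
        rw [hj]
        simp only [Nat.add_sub_cancel, Nat.choose_succ_succ]
        push_cast
        ring
      · rw [if_neg h, if_neg (show ¬ 2 ∣ (k-2) by omega), if_neg h, sub_zero]
    · rw [if_neg hk]
      interval_cases k
      · simp
      · rw [if_neg (by omega)]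
        simp

theorem main_conv (N M : ℕ) :
    ∑ ij ∈ Finset.HasAntidiagonal.antidiagonal (2*M), ((-1:ℤ))^ij.1 * ((N+2).choose ij.1) * (N.choose ij.2)
      = (-1)^M * (N.choose M) + (if M = 0 then 0 else ((-1:ℤ))^(M-1) * N.choose (M-1)) := by
  have hpoly : ((1 - X : ℤ[X])^(N+2) * (1+X)^N)
      = (1 - X^2)^N - (1 - X^2)^N * X^1 - (1 - X^2)^N * X^1 + (1 - X^2)^N * X^2 := by
    have h1 : ((1 - X : ℤ[X])^(N+2) * (1+X)^N) = ((1-X)*(1+X))^N * (1-X)^2 := by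
      rw [mul_pow]; ring
    rw [h1]
    have h2 : ((1 - X : ℤ[X])*(1+X)) = 1 - X^2 := by ring
    rw [h2]; ring
  have hc := congrArg (fun p : ℤ[X] => p.coeff (2*M)) hpoly
  simp only [Polynomial.coeff_sub, Polynomial.coeff_add,
    Polynomial.coeff_mul_X_pow', coeff_one_sub_X_sq_pow'] at hc
  have hL : ((1 - X : ℤ[X])^(N+2) * (1+X)^N).coeff (2*M)
      = ∑ ij ∈ Finset.HasAntidiagonal.antidiagonal (2*M),
          ((-1:ℤ))^ij.1 * ((N+2).choose ij.1) * (N.choose ij.2) := by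
    rw [Polynomial.coeff_mul]
    refine Finset.sum_congr rfl fun ij _ => ?_
    rw [coeff_one_sub_X_pow', Polynomial.coeff_one_add_X_pow, mul_assoc]
  rw [hL] at hc
  rw [hc]
  rcases Nat.eq_zero_or_pos M with hM | hM
  · subst hM
    norm_num
  · have h1 : (2:ℕ) ∣ 2*M := ⟨M, rfl⟩
    have h2 : ¬ (2:ℕ) ∣ 2*M-1 := by omega
    have h3 : (2:ℕ) ∣ 2*M-2 := by omega
    simp only [h1, h2, h3, if_true, if_false, eq_self_iff_true,
      if_pos (show 1 ≤ 2*M by omega), if_pos (show 2 ≤ 2*M by omega),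
      if_neg (show ¬ M = 0 by omega), ite_true, ite_false]
    rw [show (2*M-2)/2 = M - 1 by omega, show (2*M)/2 = M by omega]
    ring

theorem H1_nat (N M : ℕ) :
    -(((N+2).choose M : ℤ) * N.choose M)
      - ∑ i ∈ Finset.range M, (-1:ℤ)^(i+1) *
          ((N+2).choose (M+i+1) * N.choose (M-(i+1))
            + (N+2).choose (M-(i+1)) * N.choose (M+i+1))
    = (if M = 0 then 0 else (N.choose (M-1):ℤ)) - N.choose M := by
  set g : ℕ → ℤ := fun j => (-1:ℤ)^j * ((N+2).choose j) * (N.choose (2*M - j)) with hg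
  have hS : ∑ i ∈ Finset.range (2*M+1), g i
      = (-1:ℤ)^M * (N.choose M) + (if M = 0 then 0 else ((-1:ℤ))^(M-1) * N.choose (M-1)) := by
    rw [← main_conv N M, Finset.Nat.sum_antidiagonal_eq_sum_range_succ_mk]
  have hsplit : ∑ i ∈ Finset.range (2*M+1), g i
      = (∑ i ∈ Finset.range M, g i) + ∑ i ∈ Finset.range (M+1), g (M + i) := by
    rw [show 2*M+1 = M + (M+1) by omega, Finset.sum_range_add]
  have h2 : ∑ i ∈ Finset.range (M+1), g (M + i)
      = (∑ i ∈ Finset.range M, g (M + (i+1))) + g M := by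
    rw [Finset.sum_range_succ']
    simp
  have h3 : ∑ i ∈ Finset.range M, g i = ∑ i ∈ Finset.range M, g (M - 1 - i) :=
    (Finset.sum_range_reflect g M).symm
  have hT : ∑ i ∈ Finset.range (2*M+1), g i
      = (-1:ℤ)^M * (((N+2).choose M : ℤ) * N.choose M
          + ∑ i ∈ Finset.range M, (-1:ℤ)^(i+1) *
            ((N+2).choose (M+i+1) * N.choose (M-(i+1))
              + (N+2).choose (M-(i+1)) * N.choose (M+i+1))) := by
    rw [hsplit, h2, h3, mul_add, Finset.mul_sum]
    have hgM : g M = (-1:ℤ)^M * (((N+2).choose M : ℤ) * N.choose M) := by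
      simp only [hg]
      rw [show 2*M - M = M by omega]
      ring
    have key : ∀ i ∈ Finset.range M, g (M-1-i) + g (M+(i+1))
        = (-1:ℤ)^M * ((-1:ℤ)^(i+1) *
            (((N+2).choose (M+i+1) : ℤ) * N.choose (M-(i+1))
              + ((N+2).choose (M-(i+1)) : ℤ) * N.choose (M+i+1))) := by
      intro i hi
      have hiM : i < M := Finset.mem_range.mp hi
      have e1 : M - 1 - i = M - (i+1) := by omega
      have e2 : 2*M - (M - (i+1)) = M + i + 1 := by omega
      have e3 : 2*M - (M + (i+1)) = M - (i+1) := by omega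
      have e4 : M + (i+1) = M + i + 1 := by omega
      have e3' : 2*M - (M+i+1) = M - (i+1) := by omega
      have e5 : (-1:ℤ)^(M - (i+1)) = (-1)^(M+i+1) := by
        rw [show M + i + 1 = (M - (i+1)) + 2*(i+1) by omega, pow_add, pow_mul]
        norm_num
      have e6 : (-1:ℤ)^(M+i+1) = (-1)^M * (-1)^(i+1) := by
        rw [show M+i+1 = M + (i+1) by omega, pow_add]
      simp only [hg, e1, e2, e3, e4, e3', e5, e6]
      ring
    have hsum : ∑ i ∈ Finset.range M, g (M-1-i) + ∑ i ∈ Finset.range M, g (M+(i+1))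
        = ∑ i ∈ Finset.range M, (-1:ℤ)^M * ((-1:ℤ)^(i+1) *
            (((N+2).choose (M+i+1) : ℤ) * N.choose (M-(i+1))
              + ((N+2).choose (M-(i+1)) : ℤ) * N.choose (M+i+1))) := by
      rw [← Finset.sum_add_distrib]
      exact Finset.sum_congr rfl key
    rw [hgM, ← hsum]
    ring
  have h0 : (-1:ℤ)^M * (∑ i ∈ Finset.range (2*M+1), g i)
      = (-1:ℤ)^M * ((-1:ℤ)^M * (N.choose M)
          + (if M = 0 then 0 else ((-1:ℤ))^(M-1) * N.choose (M-1))) := by rw [hS]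
  rw [hT] at h0
  have hmm : (-1:ℤ)^M * (-1:ℤ)^M = 1 := by
    rw [← pow_add, show M + M = 2*M by omega, pow_mul]; norm_num
  rcases Nat.eq_zero_or_pos M with hM | hM
  · subst hM
    norm_num
  · rw [if_neg (by omega : ¬ M = 0)] at h0 ⊢
    have hmo : (-1:ℤ)^M * (-1:ℤ)^(M-1) = -1 := by
      rw [← pow_add, show M + (M-1) = 2*(M-1)+1 by omega, pow_succ, pow_mul]; norm_num
    nlinarith [h0, hmm, hmo, sq_nonneg ((-1:ℤ)^M)]

theorem ichoose_natCast (p q : ℕ) : ichoose p q = p.choose q := by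
  unfold ichoose
  split_ifs with h
  · simp
  · push_neg at h
    have hpq : (p:ℤ) < q := h (by positivity)
    have : p < q := by exact_mod_cast hpq
    simp [Nat.choose_eq_zero_of_lt this]

theorem ichoose_neg (a b : ℤ) (hb : b < 0) : ichoose a b = 0 := by
  unfold ichoose
  rw [if_neg (by omega)]

theorem H1_identity (n m : ℤ) (hn : 2 ≤ n) (hm0 : 0 ≤ m) (hm1 : m ≤ n - 1) :
    -ichoose n m * ichoose (n - 2) m
      - ∑ k ∈ Finset.Icc (1 : ℤ) m, (-1 : ℤ) ^ k.toNat *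
          (ichoose n (m + k) * ichoose (n - 2) (m - k)
            + ichoose n (m - k) * ichoose (n - 2) (m + k))
    = ichoose (n - 2) (m - 1) - ichoose (n - 2) m := by
  obtain ⟨N, hN⟩ : ∃ N : ℕ, (N:ℤ) = n - 2 := ⟨(n-2).toNat, Int.toNat_of_nonneg (by omega)⟩
  obtain ⟨M, hM⟩ : ∃ M : ℕ, (M:ℤ) = m := ⟨m.toNat, Int.toNat_of_nonneg hm0⟩
  have hn' : n = ((N + 2 : ℕ) : ℤ) := by push_cast; omega
  have hn2 : n - 2 = ((N:ℕ):ℤ) := by omega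
  subst hM
  -- convert the Icc sum to a range sum
  have hIcc : ∀ (K : ℕ) (f : ℤ → ℤ), ∑ k ∈ Finset.Icc (1:ℤ) (K:ℤ), f k
      = ∑ i ∈ Finset.range K, f ((i:ℤ)+1) := by
    intro K f
    induction K with
    | zero => simp
    | succ K ih =>
      have hins : Finset.Icc (1:ℤ) ((K+1:ℕ):ℤ) = insert ((K:ℤ)+1) (Finset.Icc 1 (K:ℤ)) := by
        ext x
        simp only [Finset.mem_Icc, Finset.mem_insert]
        push_cast
        omega
      rw [hins, Finset.sum_insert (by simp), ih, Finset.sum_range_succ]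
      push_cast
      ring
  rw [hIcc M]
  have hterm : ∀ i ∈ Finset.range M, (-1:ℤ) ^ ((i:ℤ)+1).toNat *
          (ichoose n ((M:ℤ) + ((i:ℤ)+1)) * ichoose (n - 2) ((M:ℤ) - ((i:ℤ)+1))
            + ichoose n ((M:ℤ) - ((i:ℤ)+1)) * ichoose (n - 2) ((M:ℤ) + ((i:ℤ)+1)))
      = (-1:ℤ)^(i+1) *
          (((N+2).choose (M+i+1) : ℤ) * N.choose (M-(i+1))
            + ((N+2).choose (M-(i+1)) : ℤ) * N.choose (M+i+1)) := by
    intro i hi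
    have hiM : i < M := Finset.mem_range.mp hi
    have c1 : (M:ℤ) + ((i:ℤ)+1) = ((M+i+1 : ℕ):ℤ) := by push_cast; ring
    have c2 : (M:ℤ) - ((i:ℤ)+1) = ((M-(i+1) : ℕ):ℤ) := by push_cast [Nat.cast_sub (by omega : i+1 ≤ M)]; ring
    have c3 : ((i:ℤ)+1).toNat = i + 1 := by omega
    rw [c1, c2, c3, hn2, hn', ichoose_natCast, ichoose_natCast, ichoose_natCast, ichoose_natCast]
  rw [Finset.sum_congr rfl hterm]
  have a1 : ichoose n (M:ℤ) = ((N+2).choose M : ℤ) := by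
    rw [hn', show ((M:ℕ):ℤ) = ((M:ℕ):ℤ) from rfl, ichoose_natCast]
  have a2 : ichoose (n-2) (M:ℤ) = (N.choose M : ℤ) := by
    rw [hn2, ichoose_natCast]
  have a3 : ichoose (n-2) ((M:ℤ) - 1) = if M = 0 then 0 else (N.choose (M-1) : ℤ) := by
    rcases Nat.eq_zero_or_pos M with h | h
    · subst h
      rw [if_pos rfl]
      exact ichoose_neg _ _ (by norm_num)
    · rw [if_neg (by omega)]
      rw [show (M:ℤ) - 1 = ((M - 1 : ℕ):ℤ) by push_cast [Nat.cast_sub (by omega : 1 ≤ M)]; ring,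
        hn2, ichoose_natCast]
  rw [a1, a2, a3]
  have := H1_nat N M
  linarith [this]
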